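/- Let {Zᵢ} be i.i.d. standard normal random variables. If v_m = (1−ε_m)√(2 log m) with ε_m → 0 and ε_m√(log m) → ∞, then E| (1/m) Σᵢ₌₁^m exp(v_m Zᵢ − v_m²/2) − 1 | → 0 as m → ∞. -/

import Mathlib

open MeasureTheory ProbabilityTheory Filter

open Real Set
open scoped ENNReal NNReal

noncomputable def γ : Measure ℝ := gaussianReal 0 1

instance : IsProbabilityMeasure γ := by unfold γ; infer_instance

lemma gauss_pdf_mul (v x : ℝ) :
    gaussianPDFReal 0 1 x * Real.exp (v * x - v ^ 2 / 2) = gaussianPDFReal v 1 x := by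
  simp only [gaussianPDFReal, NNReal.coe_one, mul_one, sub_zero]
  rw [mul_assoc, ← Real.exp_add]
  congr 1
  ring

lemma integral_gauss (f : ℝ → ℝ) :
    ∫ x, f x ∂γ = ∫ x, gaussianPDFReal 0 1 x * f x := by
  have h : γ = volume.withDensity (fun x => ((gaussianPDFReal 0 1 x).toNNReal : ℝ≥0∞)) := by
    unfold γ
    rw [gaussianReal_of_var_ne_zero _ one_ne_zero]
    rfl
  rw [h, integral_withDensity_eq_integral_smul
    (measurable_gaussianPDFReal 0 1).real_toNNReal f]
  congr 1; ext x
  simp [NNReal.smul_def, Real.coe_toNNReal _ (gaussianPDFReal_nonneg 0 1 x)]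

lemma integrable_tilt (v : ℝ) :
    Integrable (fun x => Real.exp (v * x - v ^ 2 / 2)) γ := by
  have h : γ = volume.withDensity (fun x => ((gaussianPDFReal 0 1 x).toNNReal : ℝ≥0∞)) := by
    unfold γ
    rw [gaussianReal_of_var_ne_zero _ one_ne_zero]
    rfl
  rw [h, integrable_withDensity_iff_integrable_smul
    (measurable_gaussianPDFReal 0 1).real_toNNReal]
  have : (fun x => ((gaussianPDFReal 0 1 x).toNNReal : ℝ) • Real.exp (v * x - v ^ 2 / 2))
      = gaussianPDFReal v 1 := by
    ext x
    rw [smul_eq_mul, Real.coe_toNNReal _ (gaussianPDFReal_nonneg 0 1 x), gauss_pdf_mul]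
  rw [show (fun x => ((gaussianPDFReal 0 1 x).toNNReal : ℝ≥0) • Real.exp (v * x - v ^ 2 / 2)) = gaussianPDFReal v 1 from this]
  exact integrable_gaussianPDFReal v 1

lemma tilt_integral (v : ℝ) {s : Set ℝ} (hs : MeasurableSet s) :
    ∫ x, s.indicator (fun x => Real.exp (v * x - v ^ 2 / 2)) x ∂γ
      = ((gaussianReal v 1) s).toReal := by
  rw [integral_gauss]
  have h1 : (fun x => gaussianPDFReal 0 1 x * s.indicator (fun x => Real.exp (v * x - v ^ 2 / 2)) x)
      = s.indicator (gaussianPDFReal v 1) := by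
    ext x
    by_cases hx : x ∈ s <;> simp [indicator_of_mem, indicator_of_notMem, hx, gauss_pdf_mul]
  rw [h1, integral_indicator hs, gaussianReal_apply_eq_integral _ one_ne_zero s,
    ENNReal.toReal_ofReal (integral_nonneg fun x => gaussianPDFReal_nonneg _ _ _)]

lemma gauss_univ (v : ℝ) : ∫ x, Real.exp (v * x - v ^ 2 / 2) ∂γ = 1 := by
  have := tilt_integral v MeasurableSet.univ
  simpa using this

lemma integrable_exp_mul (t : ℝ) : Integrable (fun x => Real.exp (t * x)) γ := by
  have h := (integrable_tilt t).const_mul (Real.exp (t ^ 2 / 2))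
  refine h.congr (ae_of_all _ fun x => ?_)
  simp only [← Real.exp_add]
  congr 1; ring

lemma mgf_gauss (t : ℝ) : mgf id γ t = Real.exp (t ^ 2 / 2) := by
  have h := gauss_univ t
  unfold mgf
  have : (fun x : ℝ => Real.exp (t * x)) =
      fun x => Real.exp (t ^ 2 / 2) * Real.exp (t * x - t ^ 2 / 2) := by
    ext x; rw [← Real.exp_add]; congr 1; ring
  calc ∫ x, Real.exp (t * id x) ∂γ
      = ∫ x, Real.exp (t ^ 2 / 2) * Real.exp (t * x - t ^ 2 / 2) ∂γ := by
        simp only [id]; rw [← this]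
    _ = Real.exp (t ^ 2 / 2) * ∫ x, Real.exp (t * x - t ^ 2 / 2) ∂γ := integral_const_mul _ _
    _ = Real.exp (t ^ 2 / 2) := by rw [h, mul_one]

lemma gauss_tail_upper {x : ℝ} (hx : 0 ≤ x) : (γ (Set.Ici x)).toReal ≤ Real.exp (-x ^ 2 / 2) := by
  have h := measure_ge_le_exp_mul_mgf (μ := γ) (X := id) (t := x) x hx
    (by simpa using integrable_exp_mul x)
  simp only [id] at h
  have hs : {ω : ℝ | x ≤ ω} = Set.Ici x := rfl
  rw [hs, mgf_gauss] at h
  calc (γ (Set.Ici x)).toReal ≤ Real.exp (-x * x) * Real.exp (x ^ 2 / 2) := h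
    _ = Real.exp (-x ^ 2 / 2) := by rw [← Real.exp_add]; congr 1; ring

lemma gauss_tail_lower {x : ℝ} (hx : x ≤ 0) : (γ (Set.Iic x)).toReal ≤ Real.exp (-x ^ 2 / 2) := by
  have h := measure_le_le_exp_mul_mgf (μ := γ) (X := id) (t := x) x hx
    (by simpa using integrable_exp_mul x)
  simp only [id] at h
  have hs : {ω : ℝ | ω ≤ x} = Set.Iic x := rfl
  rw [hs, mgf_gauss] at h
  calc (γ (Set.Iic x)).toReal ≤ Real.exp (-x * x) * Real.exp (x ^ 2 / 2) := h
    _ = Real.exp (-x ^ 2 / 2) := by rw [← Real.exp_add]; congr 1; ring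

lemma gauss_translate (w : ℝ) (s : Set ℝ) (hs : MeasurableSet s) :
    (gaussianReal w 1) s = γ ((fun z => z + w) ⁻¹' s) := by
  have h : (gaussianReal w 1) = (gaussianReal 0 1).map (fun z => z + w) := by
    rw [gaussianReal_map_add_const w, zero_add]
  rw [h, Measure.map_apply (measurable_add_const w) hs]
  rfl

lemma abs_int_le_sqrt {Ω' : Type*} [MeasurableSpace Ω'] {μ : Measure Ω'} [IsProbabilityMeasure μ]
    {Y : Ω' → ℝ} (hY : MemLp Y 2 μ) :
    ∫ ω, |Y ω| ∂μ ≤ Real.sqrt (∫ ω, (Y ω) ^ 2 ∂μ) := by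
  have hY1 : Integrable Y μ := hY.integrable one_le_two
  have hY2 : Integrable (fun ω => (Y ω) ^ 2) μ := by
    have := hY.integrable_sq
    simpa using this
  have hS : 0 ≤ ∫ ω, (Y ω) ^ 2 ∂μ := integral_nonneg fun ω => sq_nonneg _
  have key : ∀ t : ℝ, 0 < t → ∫ ω, |Y ω| ∂μ ≤ ((∫ ω, (Y ω) ^ 2 ∂μ) / t + t) / 2 := by
    intro t ht
    have hptwise : ∀ ω, |Y ω| ≤ ((Y ω) ^ 2 / t + t) / 2 := by
      intro ω
      have h0 : 0 ≤ (|Y ω| - t) ^ 2 := sq_nonneg _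
      have h1 : 2 * t * |Y ω| ≤ (Y ω) ^ 2 + t ^ 2 := by nlinarith [sq_abs (Y ω)]
      rw [div_add' _ _ _ ht.ne', div_div, le_div_iff₀ (by positivity)]
      nlinarith
    calc ∫ ω, |Y ω| ∂μ ≤ ∫ ω, ((Y ω) ^ 2 / t + t) / 2 ∂μ := by
          refine integral_mono hY1.abs ?_ hptwise
          exact ((hY2.div_const t).add (integrable_const t)).div_const 2
      _ = ((∫ ω, (Y ω) ^ 2 ∂μ) / t + t) / 2 := by
          rw [integral_div, integral_add (hY2.div_const t) (integrable_const t),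
            integral_div, integral_const]
          simp
  rcases eq_or_lt_of_le hS with h0 | hpos
  · have hle : ∀ t : ℝ, 0 < t → ∫ ω, |Y ω| ∂μ ≤ t := by
      intro t ht
      have := key t ht
      rw [← h0] at this
      calc ∫ ω, |Y ω| ∂μ ≤ (0 / t + t) / 2 := this
        _ ≤ t := by rw [zero_div, zero_add]; linarith
    have : ∫ ω, |Y ω| ∂μ ≤ 0 := le_of_forall_pos_le_add (by intro t ht; simpa using hle t ht)
    rw [← h0]
    simpa using this
  · have ht : 0 < Real.sqrt (∫ ω, (Y ω) ^ 2 ∂μ) := Real.sqrt_pos.mpr hpos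
    have := key _ ht
    rwa [Real.div_sqrt, ← two_mul, mul_div_cancel_left₀ _ (two_ne_zero)] at this

lemma abs_dev_le_sqrt_var {Ω' : Type*} [MeasurableSpace Ω'] {μ : Measure Ω'}
    [IsProbabilityMeasure μ] {X : Ω' → ℝ} (hX : MemLp X 2 μ) :
    ∫ ω, |X ω - ∫ ω', X ω' ∂μ| ∂μ ≤ Real.sqrt (variance X μ) := by
  have hsub : MemLp (fun ω => X ω - ∫ ω', X ω' ∂μ) 2 μ := hX.sub (memLp_const _)
  have h := abs_int_le_sqrt hsub
  have hvar : variance X μ = ∫ ω, (X ω - ∫ ω', X ω' ∂μ) ^ 2 ∂μ := by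
    rw [variance_eq_integral hX.aestronglyMeasurable.aemeasurable]
  rw [hvar]
  exact h

section Main

variable {Ω : Type*} [MeasureSpace Ω] [IsProbabilityMeasure (ℙ : Measure Ω)]

set_option maxHeartbeats 1000000 in
lemma main_bound (Z : ℕ → Ω → ℝ) (hmeas : ∀ i, Measurable (Z i))
    (hindep : iIndepFun Z ℙ)
    (hgauss : ∀ i, Measure.map (Z i) ℙ = gaussianReal 0 1)
    (m : ℕ) (hm : 1 ≤ m) (w T : ℝ) (hw : 0 ≤ w) :
    ∫ ω, |(1 / (m : ℝ)) * ∑ i ∈ Finset.range m, Real.exp (w * Z i ω - w ^ 2 / 2) - 1| ∂ℙ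
      ≤ Real.sqrt (Real.exp (w ^ 2) * (γ (Set.Iic (T - 2 * w))).toReal / m)
        + 2 * (γ (Set.Ioi (T - w))).toReal := by
  have hm0 : (0 : ℝ) < m := by exact_mod_cast hm
  set g : ℝ → ℝ := fun z => Real.exp (w * z - w ^ 2 / 2) with hg
  set f : ℝ → ℝ := (Set.Iic T).indicator g with hf
  set h : ℝ → ℝ := (Set.Ioi T).indicator g with hh
  have hgmeas : Measurable g := by
    apply Real.measurable_exp.comp
    exact (measurable_const.mul measurable_id).sub measurable_const
  have hfmeas : Measurable f := hgmeas.indicator measurableSet_Iic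
  have hhmeas : Measurable h := hgmeas.indicator measurableSet_Ioi
  have hgsplit : ∀ z, g z = f z + h z := by
    intro z
    by_cases hz : z ≤ T
    · simp [hf, hh, Set.indicator_of_mem, Set.indicator_of_notMem, hz, not_lt.mpr hz]
    · simp [hf, hh, Set.indicator_of_mem, Set.indicator_of_notMem, hz, lt_of_not_ge hz]
  have hgnn : ∀ z, 0 ≤ g z := fun z => (Real.exp_pos _).le
  have hfnn : ∀ z, 0 ≤ f z := fun z => Set.indicator_nonneg (fun z _ => hgnn z) z
  have hhnn : ∀ z, 0 ≤ h z := fun z => Set.indicator_nonneg (fun z _ => hgnn z) z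
  have hgint : Integrable g γ := integrable_tilt w
  have hfint : Integrable f γ := hgint.indicator measurableSet_Iic
  have hhint : Integrable h γ := hgint.indicator measurableSet_Ioi
  -- values of the three integrals
  set a : ℝ := ∫ x, f x ∂γ with ha
  set b : ℝ := ∫ x, h x ∂γ with hb
  have hab : a + b = 1 := by
    rw [ha, hb, ← integral_add hfint hhint]
    simp_rw [← hgsplit]
    exact gauss_univ w
  have hbval : b = (γ (Set.Ioi (T - w))).toReal := by
    have hset : (fun z => z + w) ⁻¹' Set.Ioi T = Set.Ioi (T - w) := by
      ext z; simp [lt_sub_iff_add_lt]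
    rw [hb, hh, hg, tilt_integral w measurableSet_Ioi,
      gauss_translate w _ measurableSet_Ioi, hset]
  have hbnn : 0 ≤ b := hb ▸ integral_nonneg fun z => hhnn z
  -- second moment of f
  have hf2 : ∫ x, (f x) ^ 2 ∂γ
      = Real.exp (w ^ 2) * (γ (Set.Iic (T - 2 * w))).toReal := by
    have hsq : ∀ x, (f x) ^ 2 = Real.exp (w ^ 2) *
        (Set.Iic T).indicator (fun z => Real.exp ((2 * w) * z - (2 * w) ^ 2 / 2)) x := by
      intro x
      by_cases hx : x ∈ Set.Iic T
      · simp only [hf, Set.indicator_of_mem hx, hg]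
        rw [← Real.exp_nat_mul, ← Real.exp_add]
        congr 1
        ring
      · simp [hf, Set.indicator_of_notMem hx]
    simp_rw [hsq]
    have hset : (fun z => z + 2 * w) ⁻¹' Set.Iic T = Set.Iic (T - 2 * w) := by
      ext z; simp [le_sub_iff_add_le]
    rw [integral_const_mul, tilt_integral (2 * w) measurableSet_Iic,
      gauss_translate (2 * w) _ measurableSet_Iic, hset]
  -- transfer to Ω
  have hcomp_int : ∀ (φ : ℝ → ℝ), Measurable φ → Integrable φ γ → ∀ i,
      Integrable (fun ω => φ (Z i ω)) ℙ := by
    intro φ hφm hφi i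
    have := (integrable_map_measure hφm.aestronglyMeasurable (hmeas i).aemeasurable).mp
      (by rw [hgauss i] at *; exact hφi)
    exact this
  have hcomp_eq : ∀ (φ : ℝ → ℝ), Measurable φ → ∀ i,
      ∫ ω, φ (Z i ω) ∂ℙ = ∫ x, φ x ∂γ := by
    intro φ hφm i
    rw [show (γ : Measure ℝ) = Measure.map (Z i) ℙ from (hgauss i).symm,
      integral_map (hmeas i).aemeasurable hφm.aestronglyMeasurable]
  -- f∘Z i is bounded hence MemLp 2
  have hfbdd : ∀ z, |f z| ≤ Real.exp (w * T - w ^ 2 / 2) := by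
    intro z
    rw [abs_of_nonneg (hfnn z)]
    by_cases hz : z ∈ Set.Iic T
    · rw [hf, Set.indicator_of_mem hz, hg]
      exact Real.exp_le_exp.mpr (by simp only [Set.mem_Iic] at hz; nlinarith)
    · rw [hf, Set.indicator_of_notMem hz]
      positivity
  have hfZ2 : ∀ i, MemLp (fun ω => f (Z i ω)) 2 ℙ := by
    intro i
    refine MemLp.mono_exponent ?_ le_top
    exact memLp_top_of_bound (hfmeas.comp (hmeas i)).aestronglyMeasurable _
      (Filter.Eventually.of_forall fun ω => hfbdd (Z i ω))
  -- the sum W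
  set W : Ω → ℝ := fun ω => ∑ i ∈ Finset.range m, f (Z i ω) with hW
  have hWe : W = ∑ i ∈ Finset.range m, (fun ω => f (Z i ω)) := by
    ext ω; simp [hW, Finset.sum_apply]
  have hWmem : MemLp W 2 ℙ := by
    rw [hWe]
    exact memLp_finset_sum' _ (fun i _ => hfZ2 i)
  have hWint : Integrable W ℙ := hWmem.integrable one_le_two
  have hWmean : ∫ ω, W ω ∂ℙ = m * a := by
    rw [hW]
    rw [integral_finset_sum _ (fun i _ => hcomp_int f hfmeas hfint i)]
    simp_rw [hcomp_eq f hfmeas]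
    rw [Finset.sum_const, Finset.card_range, nsmul_eq_mul, ha]
  have hvar : variance W ℙ ≤ m * ∫ x, (f x) ^ 2 ∂γ := by
    have hvs : variance W ℙ = ∑ i ∈ Finset.range m, variance (fun ω => f (Z i ω)) ℙ := by
      rw [hWe]
      apply IndepFun.variance_sum (fun i _ => hfZ2 i)
      intro i hi j hj hij
      exact (hindep.indepFun hij).comp hfmeas hfmeas
    rw [hvs]
    have hone : ∀ i, variance (fun ω => f (Z i ω)) ℙ ≤ ∫ x, (f x) ^ 2 ∂γ := by
      intro i
      have h1 := variance_le_expectation_sq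
        (μ := (ℙ : Measure Ω)) (X := fun ω => f (Z i ω))
        (hfmeas.comp (hmeas i)).aestronglyMeasurable
      have h2 : (ℙ : Measure Ω)[(fun ω => f (Z i ω)) ^ 2] = ∫ x, (f x) ^ 2 ∂γ := by
        have := hcomp_eq (fun x => (f x) ^ 2) (hfmeas.pow_const 2) i
        simpa using this
      rw [h2] at h1
      exact h1
    calc ∑ i ∈ Finset.range m, variance (fun ω => f (Z i ω)) ℙ
        ≤ ∑ _i ∈ Finset.range m, ∫ x, (f x) ^ 2 ∂γ := Finset.sum_le_sum fun i _ => hone i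
      _ = m * ∫ x, (f x) ^ 2 ∂γ := by rw [Finset.sum_const, Finset.card_range, nsmul_eq_mul]
  -- term A bound
  have hA : ∫ ω, |W ω - m * a| ∂ℙ ≤ Real.sqrt (m * ∫ x, (f x) ^ 2 ∂γ) := by
    have := abs_dev_le_sqrt_var hWmem
    rw [hWmean] at this
    exact this.trans (Real.sqrt_le_sqrt hvar)
  -- term B
  set V : Ω → ℝ := fun ω => ∑ i ∈ Finset.range m, h (Z i ω) with hV
  have hVint : Integrable V ℙ :=
    integrable_finset_sum _ (fun i _ => hcomp_int h hhmeas hhint i)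
  have hVmean : ∫ ω, V ω ∂ℙ = m * b := by
    rw [hV, integral_finset_sum _ (fun i _ => hcomp_int h hhmeas hhint i)]
    simp_rw [hcomp_eq h hhmeas]
    rw [Finset.sum_const, Finset.card_range, nsmul_eq_mul, hb]
  have hVnn : ∀ ω, 0 ≤ V ω := fun ω => Finset.sum_nonneg fun i _ => hhnn _
  have hB : ∫ ω, |V ω - m * b| ∂ℙ ≤ 2 * (m * b) := by
    have hptw : ∀ ω, |V ω - m * b| ≤ V ω + m * b := by
      intro ω
      rw [abs_le]
      constructor
      · have := hVnn ω; have : (0:ℝ) ≤ m * b := by positivity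
        nlinarith [hVnn ω]
      · nlinarith [hVnn ω, mul_nonneg hm0.le hbnn]
    calc ∫ ω, |V ω - m * b| ∂ℙ ≤ ∫ ω, V ω + m * b ∂ℙ :=
          integral_mono (hVint.sub (integrable_const _)).abs
            (hVint.add (integrable_const _)) hptw
      _ = m * b + m * b := by
          rw [integral_add hVint (integrable_const _), hVmean, integral_const]
          simp
      _ = 2 * (m * b) := by ring
  -- put together
  have hdecomp : ∀ ω, (1 / (m : ℝ)) * ∑ i ∈ Finset.range m, Real.exp (w * Z i ω - w ^ 2 / 2) - 1
      = (1 / (m : ℝ)) * ((W ω - m * a) + (V ω - m * b)) := by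
    intro ω
    have hsum : ∑ i ∈ Finset.range m, Real.exp (w * Z i ω - w ^ 2 / 2) = W ω + V ω := by
      rw [hW, hV, ← Finset.sum_add_distrib]
      exact Finset.sum_congr rfl fun i _ => hgsplit (Z i ω)
    rw [hsum]
    have hmab : (m:ℝ) * a + (m:ℝ) * b = m := by rw [← mul_add, hab, mul_one]
    field_simp
    linarith [hmab]
  calc ∫ ω, |(1 / (m : ℝ)) * ∑ i ∈ Finset.range m, Real.exp (w * Z i ω - w ^ 2 / 2) - 1| ∂ℙ
      = ∫ ω, (1 / (m : ℝ)) * |(W ω - m * a) + (V ω - m * b)| ∂ℙ := by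
        congr 1; ext ω
        rw [hdecomp ω, abs_mul, abs_of_nonneg (by positivity : (0:ℝ) ≤ 1 / (m:ℝ))]
    _ = (1 / (m : ℝ)) * ∫ ω, |(W ω - m * a) + (V ω - m * b)| ∂ℙ := integral_const_mul _ _
    _ ≤ (1 / (m : ℝ)) * (∫ ω, |W ω - m * a| ∂ℙ + ∫ ω, |V ω - m * b| ∂ℙ) := by
        have hWa : Integrable (fun ω => |W ω - (m:ℝ) * a|) ℙ :=
          (hWint.sub (integrable_const _)).abs
        have hVb : Integrable (fun ω => |V ω - (m:ℝ) * b|) ℙ :=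
          (hVint.sub (integrable_const _)).abs
        have habs : ∫ ω, |(W ω - m * a) + (V ω - m * b)| ∂ℙ
            ≤ ∫ ω, |W ω - m * a| + |V ω - m * b| ∂ℙ := by
          refine integral_mono ?_ (hWa.add hVb) (fun ω => abs_add_le _ _)
          exact ((hWint.sub (integrable_const _)).add (hVint.sub (integrable_const _))).abs
        rw [integral_add hWa hVb] at habs
        exact mul_le_mul_of_nonneg_left habs (by positivity)
    _ ≤ (1 / (m : ℝ)) * (Real.sqrt (m * ∫ x, (f x) ^ 2 ∂γ) + 2 * (m * b)) := by
        have := add_le_add hA hB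
        exact mul_le_mul_of_nonneg_left this (by positivity)
    _ = Real.sqrt ((∫ x, (f x) ^ 2 ∂γ) / m) + 2 * b := by
        rw [mul_add]
        congr 1
        · rw [show (m : ℝ) * ∫ x, (f x) ^ 2 ∂γ = ((∫ x, (f x) ^ 2 ∂γ) / m) * (m:ℝ)^2 by
            field_simp]
          rw [Real.sqrt_mul' _ (sq_nonneg (m:ℝ)), Real.sqrt_sq hm0.le]
          field_simp
        · field_simp
    _ = Real.sqrt (Real.exp (w ^ 2) * (γ (Set.Iic (T - 2 * w))).toReal / m)
        + 2 * (γ (Set.Ioi (T - w))).toReal := by rw [hf2, hbval]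

end Main

/-- Dümbgen–Spokoiny lemma: if `Z₁, Z₂, …` are i.i.d. standard normal and
`v_m = (1 - ε_m)√(2 log m)` with `ε_m → 0` and `ε_m √(log m) → ∞`, then
`E |(1/m) Σ_{i<m} exp(v_m Z_i - v_m²/2) - 1| → 0`. -/
theorem dumbgen_spokoiny_lemma {Ω : Type*} [MeasureSpace Ω]
    [IsProbabilityMeasure (ℙ : Measure Ω)]
    (Z : ℕ → Ω → ℝ) (hmeas : ∀ i, Measurable (Z i))
    (hindep : iIndepFun Z ℙ)
    (hgauss : ∀ i, Measure.map (Z i) ℙ = gaussianReal 0 1)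
    (v ε : ℕ → ℝ)
    (hv : ∀ m, v m = (1 - ε m) * Real.sqrt (2 * Real.log m))
    (hε0 : Tendsto ε atTop (nhds 0))
    (hεlog : Tendsto (fun m => ε m * Real.sqrt (Real.log m)) atTop atTop) :
    Tendsto (fun m : ℕ => ∫ ω,
        |(1 / (m : ℝ)) * ∑ i ∈ Finset.range m, Real.exp (v m * Z i ω - (v m) ^ 2 / 2) - 1| ∂ℙ)
      atTop (nhds 0) := by
  have hB : Tendsto (fun m : ℕ => 3 * Real.exp (-(ε m * Real.sqrt (Real.log m)) ^ 2))
      atTop (nhds 0) := by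
    have h1 : Tendsto (fun m : ℕ => (ε m * Real.sqrt (Real.log m)) ^ 2) atTop atTop :=
      (tendsto_pow_atTop two_ne_zero).comp hεlog
    have h2 : Tendsto (fun m : ℕ => -(ε m * Real.sqrt (Real.log m)) ^ 2) atTop atBot :=
      tendsto_neg_atBot_iff.mpr h1
    have h3 := Real.tendsto_exp_atBot.comp h2
    have h4 := h3.const_mul (3:ℝ)
    simpa using h4
  refine tendsto_of_tendsto_of_tendsto_of_le_of_le' tendsto_const_nhds hB ?_ ?_
  · exact Eventually.of_forall fun m => integral_nonneg fun ω => abs_nonneg _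
  · filter_upwards [eventually_ge_atTop 2, hεlog.eventually_ge_atTop 1,
      hε0.eventually (eventually_lt_nhds (by norm_num : (0:ℝ) < 1/2))] with m hm2 hε1 hεhalf
    set L : ℝ := Real.log m with hLdef
    have hm1R : (1:ℝ) < m := by exact_mod_cast hm2
    have hm0 : (0:ℝ) < m := by linarith
    have hL : 0 < L := Real.log_pos hm1R
    have hsL : 0 < Real.sqrt L := Real.sqrt_pos.mpr hL
    have hε_pos : 0 < ε m := by
      by_contra hc
      push_neg at hc
      have : ε m * Real.sqrt L ≤ 0 := mul_nonpos_iff.mpr (Or.inr ⟨hc, hsL.le⟩)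
      linarith
    set T : ℝ := Real.sqrt (2 * L) with hTdef
    have hT0 : 0 ≤ T := Real.sqrt_nonneg _
    have hT2 : T ^ 2 = 2 * L := Real.sq_sqrt (by positivity)
    have hw0 : 0 ≤ v m := by
      rw [hv m]
      exact mul_nonneg (by linarith) hT0
    have hmain := main_bound Z hmeas hindep hgauss m (by omega) (v m) T hw0
    set e : ℝ := ε m with hedef
    -- tail bound (i)
    have hTv : T - v m = e * T := by rw [hv m]; ring
    have htail1 : (γ (Set.Ioi (T - v m))).toReal ≤ Real.exp (-(e ^ 2 * L)) := by
      rw [hTv]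
      calc (γ (Set.Ioi (e * T))).toReal ≤ (γ (Set.Ici (e * T))).toReal :=
            ENNReal.toReal_mono (measure_ne_top _ _) (measure_mono Set.Ioi_subset_Ici_self)
        _ ≤ Real.exp (-(e * T) ^ 2 / 2) := gauss_tail_upper (mul_nonneg hε_pos.le hT0)
        _ = Real.exp (-(e ^ 2 * L)) := by
            congr 1
            rw [mul_pow, hT2]
            ring
    -- tail bound (ii)
    have hT2v : T - 2 * v m = (2 * e - 1) * T := by rw [hv m]; ring
    have htail2 : (γ (Set.Iic (T - 2 * v m))).toReal ≤ Real.exp (-((1 - 2 * e) ^ 2 * L)) := by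
      rw [hT2v]
      calc (γ (Set.Iic ((2 * e - 1) * T))).toReal
          ≤ Real.exp (-((2 * e - 1) * T) ^ 2 / 2) :=
            gauss_tail_lower (mul_nonpos_iff.mpr (Or.inr ⟨by linarith, hT0⟩))
        _ = Real.exp (-((1 - 2 * e) ^ 2 * L)) := by
            congr 1
            rw [mul_pow, hT2]
            ring
    have hv2 : (v m) ^ 2 = (1 - e) ^ 2 * (2 * L) := by rw [hv m, mul_pow, hT2]
    have hmexp : (m : ℝ) = Real.exp L := (Real.exp_log hm0).symm
    have hsqrt_term : Real.sqrt (Real.exp ((v m) ^ 2) * (γ (Set.Iic (T - 2 * v m))).toReal / m)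
        ≤ Real.exp (-(e ^ 2 * L)) := by
      have hstep : Real.exp ((v m) ^ 2) * (γ (Set.Iic (T - 2 * v m))).toReal / m
          ≤ Real.exp ((v m) ^ 2) * Real.exp (-((1 - 2 * e) ^ 2 * L)) / m := by
        gcongr
      calc Real.sqrt (Real.exp ((v m) ^ 2) * (γ (Set.Iic (T - 2 * v m))).toReal / m)
          ≤ Real.sqrt (Real.exp ((v m) ^ 2) * Real.exp (-((1 - 2 * e) ^ 2 * L)) / m) :=
            Real.sqrt_le_sqrt hstep
        _ = Real.sqrt (Real.exp (-(2 * (e ^ 2 * L)))) := by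
            rw [hv2, hmexp, ← Real.exp_add, ← Real.exp_sub]
            congr 1
            ring
        _ = Real.exp (-(e ^ 2 * L)) := by
            rw [show (-(2 * (e ^ 2 * L))) = (-(e ^ 2 * L)) + (-(e ^ 2 * L)) by ring,
              Real.exp_add]
            exact Real.sqrt_mul_self (Real.exp_pos _).le
    calc ∫ ω, |(1 / (m : ℝ)) * ∑ i ∈ Finset.range m,
            Real.exp (v m * Z i ω - (v m) ^ 2 / 2) - 1| ∂ℙ
        ≤ Real.sqrt (Real.exp ((v m) ^ 2) * (γ (Set.Iic (T - 2 * v m))).toReal / m)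
          + 2 * (γ (Set.Ioi (T - v m))).toReal := hmain
      _ ≤ Real.exp (-(e ^ 2 * L)) + 2 * Real.exp (-(e ^ 2 * L)) :=
            add_le_add hsqrt_term (by linarith [htail1])
      _ = 3 * Real.exp (-(e * Real.sqrt L) ^ 2) := by
            rw [mul_pow, Real.sq_sqrt hL.le]
            ring
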